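/- Let ω ∈ ℝ, ω ≠ 0 and R > 0. Define Φ(t,r) = ∂_z[ e^{iω(t-r)}/r + κ e^{iω(t+r-2R)}/r ] where ∂_z acts via the chain rule r = |x|, i.e. Φ = -cos θ [ (iω/r + 1/r²) e^{iω(t-r)} + κ(-iω/r + 1/r²) e^{iω(t+r-2R)} ]. Then the homogeneous Sommerfeld boundary condition (∂_t + ∂_r)(rΦ)|_{r=R} = 0 holds if and only if κ = 1/(2ω²R² + 2iωR - 1). -/

import Mathlib

open Complex


private lemma stmt10_key (ω R : ℝ) (hR : 0 < R) (κ : ℂ)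
    (Φ : ℝ → ℝ → ℝ → ℂ)
    (hΦ : ∀ t r θ, Φ t r θ
      = -(Real.cos θ : ℂ) *
          ((Complex.I * ω / r + 1 / (r : ℂ) ^ 2)
              * Complex.exp (Complex.I * ω * ((t : ℂ) - r))
            + κ * (-(Complex.I * ω) / r + 1 / (r : ℂ) ^ 2)
              * Complex.exp (Complex.I * ω * ((t : ℂ) + r - 2 * R))) )
    (t θ : ℝ) :
    deriv (fun s : ℝ => (R : ℂ) * Φ s R θ) t
      + deriv (fun r : ℝ => (r : ℂ) * Φ t r θ) R
    = -(Real.cos θ : ℂ) * Complex.exp (Complex.I * ω * ((t:ℂ) - R))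
        * (κ * (2*(ω:ℂ)^2 + 2*Complex.I*ω/R - 1/(R:ℂ)^2) - 1/(R:ℂ)^2) := by
  have hR0 : (R:ℂ) ≠ 0 := by exact_mod_cast hR.ne'
  -- t-derivative
  have hE1t : HasDerivAt (fun s : ℂ => Complex.exp (Complex.I * ω * (s - (R:ℂ))))
      (Complex.exp (Complex.I * ω * ((t:ℂ) - R)) * (Complex.I * ω * 1)) (t:ℂ) :=
    (((hasDerivAt_id (t:ℂ)).sub_const (R:ℂ)).const_mul (Complex.I * ω)).cexp
  have hE2t : HasDerivAt (fun s : ℂ => Complex.exp (Complex.I * ω * (s + (R:ℂ) - 2*(R:ℂ))))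
      (Complex.exp (Complex.I * ω * ((t:ℂ) + R - 2*R)) * (Complex.I * ω * 1)) (t:ℂ) :=
    ((((hasDerivAt_id (t:ℂ)).add_const (R:ℂ)).sub_const (2*(R:ℂ))).const_mul (Complex.I * ω)).cexp
  have hFt : HasDerivAt (fun s : ℂ => (R:ℂ) * (-(Real.cos θ : ℂ) *
        ((Complex.I * ω / R + 1 / (R : ℂ) ^ 2) * Complex.exp (Complex.I * ω * (s - (R:ℂ)))
          + κ * (-(Complex.I * ω) / R + 1 / (R : ℂ) ^ 2)
              * Complex.exp (Complex.I * ω * (s + (R:ℂ) - 2 * (R:ℂ))))))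
      ((R:ℂ) * (-(Real.cos θ : ℂ) *
        ((Complex.I * ω / R + 1 / (R : ℂ) ^ 2) * (Complex.exp (Complex.I * ω * ((t:ℂ) - R)) * (Complex.I * ω * 1))
          + κ * (-(Complex.I * ω) / R + 1 / (R : ℂ) ^ 2)
              * (Complex.exp (Complex.I * ω * ((t:ℂ) + R - 2*R)) * (Complex.I * ω * 1))))) (t:ℂ) :=
    (((hE1t.const_mul _).add (hE2t.const_mul _)).const_mul _).const_mul _
  have hdt : deriv (fun s : ℝ => (R : ℂ) * Φ s R θ) t
      = (R:ℂ) * (-(Real.cos θ : ℂ) *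
        ((Complex.I * ω / R + 1 / (R : ℂ) ^ 2) * (Complex.exp (Complex.I * ω * ((t:ℂ) - R)) * (Complex.I * ω * 1))
          + κ * (-(Complex.I * ω) / R + 1 / (R : ℂ) ^ 2)
              * (Complex.exp (Complex.I * ω * ((t:ℂ) + R - 2*R)) * (Complex.I * ω * 1)))) := by
    have := hFt.comp_ofReal
    have heq : (fun s : ℝ => (R : ℂ) * Φ s R θ)
        = fun s : ℝ => (R:ℂ) * (-(Real.cos θ : ℂ) *
        ((Complex.I * ω / R + 1 / (R : ℂ) ^ 2) * Complex.exp (Complex.I * ω * ((s:ℂ) - (R:ℂ)))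
          + κ * (-(Complex.I * ω) / R + 1 / (R : ℂ) ^ 2)
              * Complex.exp (Complex.I * ω * ((s:ℂ) + (R:ℂ) - 2 * (R:ℂ))))) := by
      funext s; rw [hΦ]
    rw [heq]
    exact this.deriv
  -- r-derivative
  have hE1r : HasDerivAt (fun z : ℂ => Complex.exp (Complex.I * ω * ((t:ℂ) - z)))
      (Complex.exp (Complex.I * ω * ((t:ℂ) - (R:ℂ))) * (Complex.I * ω * (-1))) (R:ℂ) := by
    have h : HasDerivAt (fun z : ℂ => Complex.I * ω * ((t:ℂ) - z)) (Complex.I * ω * (-1)) (R:ℂ) := by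
      simpa using ((hasDerivAt_id (R:ℂ)).const_sub (t:ℂ)).const_mul (Complex.I * ω)
    exact h.cexp
  have hE2r : HasDerivAt (fun z : ℂ => Complex.exp (Complex.I * ω * ((t:ℂ) + z - 2*(R:ℂ))))
      (Complex.exp (Complex.I * ω * ((t:ℂ) + (R:ℂ) - 2*(R:ℂ))) * (Complex.I * ω * 1)) (R:ℂ) := by
    have h : HasDerivAt (fun z : ℂ => Complex.I * ω * ((t:ℂ) + z - 2*(R:ℂ))) (Complex.I * ω * 1) (R:ℂ) := by
      simpa using (((hasDerivAt_id (R:ℂ)).const_add (t:ℂ)).sub_const (2*(R:ℂ))).const_mul (Complex.I * ω)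
    exact h.cexp
  have hA : HasDerivAt (fun z : ℂ => Complex.I * ω / z + 1 / z ^ 2)
      ((0 * (R:ℂ) - Complex.I * ω * 1) / (R:ℂ) ^ 2
        + (0 * (R:ℂ)^2 - 1 * ((2:ℕ) * (R:ℂ)^(2-1))) / ((R:ℂ)^2)^2) (R:ℂ) :=
    ((hasDerivAt_const (R:ℂ) (Complex.I * ω)).div (hasDerivAt_id (R:ℂ)) hR0).add
      ((hasDerivAt_const (R:ℂ) 1).div (hasDerivAt_pow 2 (R:ℂ)) (pow_ne_zero 2 hR0))
  have hB : HasDerivAt (fun z : ℂ => -(Complex.I * ω) / z + 1 / z ^ 2)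
      ((0 * (R:ℂ) - -(Complex.I * ω) * 1) / (R:ℂ) ^ 2
        + (0 * (R:ℂ)^2 - 1 * ((2:ℕ) * (R:ℂ)^(2-1))) / ((R:ℂ)^2)^2) (R:ℂ) :=
    ((hasDerivAt_const (R:ℂ) (-(Complex.I * ω))).div (hasDerivAt_id (R:ℂ)) hR0).add
      ((hasDerivAt_const (R:ℂ) 1).div (hasDerivAt_pow 2 (R:ℂ)) (pow_ne_zero 2 hR0))
  have hG := ((hasDerivAt_id (R:ℂ)).mul
    ((((hA.mul hE1r).add ((hB.const_mul κ).mul hE2r)).const_mul (-(Real.cos θ : ℂ))))).comp_ofReal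
  have hdr : deriv (fun r : ℝ => (r : ℂ) * Φ t r θ) R
      = 1 * (-(Real.cos θ : ℂ) *
          ((Complex.I * ω / (R:ℂ) + 1 / (R:ℂ) ^ 2) * Complex.exp (Complex.I * ω * ((t:ℂ) - (R:ℂ)))
            + κ * (-(Complex.I * ω) / (R:ℂ) + 1 / (R:ℂ) ^ 2)
                * Complex.exp (Complex.I * ω * ((t:ℂ) + (R:ℂ) - 2 * (R:ℂ)))))
        + (R:ℂ) * (-(Real.cos θ : ℂ) *
          ((((0 * (R:ℂ) - Complex.I * ω * 1) / (R:ℂ) ^ 2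
              + (0 * (R:ℂ)^2 - 1 * ((2:ℕ) * (R:ℂ)^(2-1))) / ((R:ℂ)^2)^2)
              * Complex.exp (Complex.I * ω * ((t:ℂ) - (R:ℂ)))
            + (Complex.I * ω / (R:ℂ) + 1 / (R:ℂ) ^ 2)
              * (Complex.exp (Complex.I * ω * ((t:ℂ) - (R:ℂ))) * (Complex.I * ω * (-1))))
          + ((κ * ((0 * (R:ℂ) - -(Complex.I * ω) * 1) / (R:ℂ) ^ 2
              + (0 * (R:ℂ)^2 - 1 * ((2:ℕ) * (R:ℂ)^(2-1))) / ((R:ℂ)^2)^2))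
              * Complex.exp (Complex.I * ω * ((t:ℂ) + (R:ℂ) - 2*(R:ℂ)))
            + (κ * (-(Complex.I * ω) / (R:ℂ) + 1 / (R:ℂ) ^ 2))
              * (Complex.exp (Complex.I * ω * ((t:ℂ) + (R:ℂ) - 2*(R:ℂ))) * (Complex.I * ω * 1))))) := by
    have heq : (fun r : ℝ => (r : ℂ) * Φ t r θ)
        = fun r : ℝ => (r:ℂ) * (-(Real.cos θ : ℂ) *
          ((Complex.I * ω / (r:ℂ) + 1 / (r:ℂ) ^ 2) * Complex.exp (Complex.I * ω * ((t:ℂ) - (r:ℂ)))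
            + κ * (-(Complex.I * ω) / (r:ℂ) + 1 / (r:ℂ) ^ 2)
                * Complex.exp (Complex.I * ω * ((t:ℂ) + (r:ℂ) - 2 * (R:ℂ))))) := by
      funext r; rw [hΦ]
    rw [heq]
    exact hG.deriv
  rw [hdt, hdr]
  have hexp : Complex.I * ω * ((t:ℂ) + (R:ℂ) - 2*(R:ℂ)) = Complex.I * ω * ((t:ℂ) - (R:ℂ)) := by ring
  rw [hexp]
  field_simp [hR0]
  ring_nf
  simp only [Complex.I_sq]
  field_simp [hR0]
  ring

private lemma stmt10_den (ω R : ℝ) (hω : ω ≠ 0) (hR : 0 < R) :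
    (2 * (ω : ℂ) ^ 2 * (R : ℂ) ^ 2 + 2 * Complex.I * ω * R - 1) ≠ 0 := by
  intro h
  have h' : ((2*ω^2*R^2 - 1 : ℝ) : ℂ) + ((2*ω*R : ℝ):ℂ) * Complex.I = 0 := by
    push_cast; linear_combination h
  have him := congrArg Complex.im h'
  simp only [Complex.add_im, Complex.ofReal_im, Complex.mul_im, Complex.ofReal_re,
    Complex.I_im, Complex.I_re, Complex.zero_im, mul_one, mul_zero, zero_add, add_zero] at him
  exact mul_ne_zero (mul_ne_zero two_ne_zero hω) hR.ne' him

theorem stmt10 (ω R : ℝ) (hω : ω ≠ 0) (hR : 0 < R) (κ : ℂ)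
    (Φ : ℝ → ℝ → ℝ → ℂ)
    (hΦ : ∀ t r θ, Φ t r θ
      = -(Real.cos θ : ℂ) *
          ((Complex.I * ω / r + 1 / (r : ℂ) ^ 2)
              * Complex.exp (Complex.I * ω * ((t : ℂ) - r))
            + κ * (-(Complex.I * ω) / r + 1 / (r : ℂ) ^ 2)
              * Complex.exp (Complex.I * ω * ((t : ℂ) + r - 2 * R))) ) :
    (∀ t θ : ℝ,
        deriv (fun s : ℝ => (R : ℂ) * Φ s R θ) t
          + deriv (fun r : ℝ => (r : ℂ) * Φ t r θ) R = 0)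
      ↔ κ = 1 / (2 * (ω : ℂ) ^ 2 * (R : ℂ) ^ 2 + 2 * Complex.I * ω * R - 1) := by
  have hR0 : (R:ℂ) ≠ 0 := by exact_mod_cast hR.ne'
  have hden := stmt10_den ω R hω hR
  constructor
  · intro h
    have h0 := h 0 0
    rw [stmt10_key ω R hR κ Φ hΦ 0 0] at h0
    simp only [Real.cos_zero, Complex.ofReal_one, neg_mul, one_mul, neg_eq_zero,
      mul_eq_zero, Complex.exp_ne_zero, false_or, sub_eq_zero] at h0
    rw [eq_div_iff hden]
    field_simp [hR0] at h0
    have := mul_left_cancel₀ hR0 (show (R:ℂ) * (κ * (2 * (ω:ℂ)^2 * (R:ℂ)^2 + 2 * Complex.I * ω * R - 1)) = (R:ℂ) * 1 by linear_combination (R:ℂ) * h0)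
    linear_combination this
  · intro hk t θ
    rw [stmt10_key ω R hR κ Φ hΦ t θ, hk]
    have hz : 1 / (2 * (ω : ℂ) ^ 2 * (R : ℂ) ^ 2 + 2 * Complex.I * ω * R - 1)
        * (2*(ω:ℂ)^2 + 2*Complex.I*ω/R - 1/(R:ℂ)^2) - 1/(R:ℂ)^2 = 0 := by
      field_simp
      have hD : (-1 + (ω:ℂ) * R * I * 2 + (ω:ℂ)^2 * R^2 * 2) ≠ 0 := by
        intro h; apply hden; linear_combination h
      linear_combination mul_inv_cancel₀ hD
    rw [hz, mul_zero]
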